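/- Let A, B, C, P be four points in the Euclidean plane with A, B, C pairwise distinct, a = dist(B,C), b = dist(C,A), c = dist(A,B). Then there exists a (possibly degenerate) triangle with side lengths proportional to a·dist(P,A), b·dist(P,B), c·dist(P,C); that is, each of the three products is at most the sum of the other two. -/
import Mathlib

/-- For any four points `A B C P` in the plane there is a (possibly degenerate)
triangle with side lengths `a·PA, b·PB, c·PC`, where `a = BC`, `b = CA`,
`c = AB`. -/
theorem stmt_9 (A B C P : EuclideanSpace ℝ (Fin 2))
    (hAB : A ≠ B) (hBC : B ≠ C) (hCA : C ≠ A)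
    (a b c : ℝ) (ha : a = dist B C) (hb : b = dist C A) (hc : c = dist A B) :
    a * dist P A ≤ b * dist P B + c * dist P C ∧
      b * dist P B ≤ c * dist P C + a * dist P A ∧
      c * dist P C ≤ a * dist P A + b * dist P B := by
  subst ha hb hc
  refine ⟨?_, ?_, ?_⟩
  · have := EuclideanGeometry.mul_dist_le_mul_dist_add_mul_dist B P C A
    simp only [dist_comm] at this ⊢
    linarith
  · have := EuclideanGeometry.mul_dist_le_mul_dist_add_mul_dist C P A B
    simp only [dist_comm] at this ⊢
    linarith
  · have := EuclideanGeometry.mul_dist_le_mul_dist_add_mul_dist A P B C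
    simp only [dist_comm] at this ⊢
    linarith
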